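/- Let w be a weight structure on a triangulated category C and let H : C^op → A be a cohomological functor into an abelian category A. For n ∈ ℤ define the virtual t-truncation τ_{≤n}(H) by M ↦ Im(H(w_{≤n+1}M) → H(w_{≤n}M)), using any choices of weight truncations and the connecting morphism extending id_M. Then τ_{≤n}(H)(M) is independent of the choices up to canonical isomorphism and is functorial in M. -/

import Mathlib

open CategoryTheory Category Limits Pretriangulated ZeroObject Opposite

universe v u u₂ v₂

variable (C : Type u) [Category.{v} C] [Preadditive C] [HasZeroObject C]
  [HasShift C ℤ] [∀ n : ℤ, (CategoryTheory.shiftFunctor C n).Additive] [Pretriangulated C]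

/-- `X` is a retract (direct summand) of `Y`. -/
def IsRetract {C : Type u} [Category.{v} C] (X Y : C) : Prop :=
  ∃ (s : X ⟶ Y) (r : Y ⟶ X), s ≫ r = 𝟙 X

/-- A weight structure on a pretriangulated category `C`, in the homological convention:
`le` is the class `C_{w≤0}` and `ge` is the class `C_{w≥0}`. -/
structure WeightStructure where
  le : Set C
  ge : Set C
  le_retract : ∀ ⦃X Y : C⦄, IsRetract X Y → Y ∈ le → X ∈ le
  ge_retract : ∀ ⦃X Y : C⦄, IsRetract X Y → Y ∈ ge → X ∈ ge
  le_shift : ∀ X : C, X ∈ le → X⟦(-1 : ℤ)⟧ ∈ le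
  ge_shift : ∀ X : C, X ∈ ge → X⟦(1 : ℤ)⟧ ∈ ge
  orth : ∀ ⦃X Y : C⦄, X ∈ le → Y ∈ ge → ∀ f : X ⟶ Y⟦(1 : ℤ)⟧, f = 0
  decomp : ∀ M : C, ∃ (L R : C) (f : L ⟶ M) (g : M ⟶ R) (h : R ⟶ L⟦(1 : ℤ)⟧),
    Triangle.mk f g h ∈ (distTriang C) ∧ L ∈ le ∧ R⟦(-1 : ℤ)⟧ ∈ ge

/-- A t-structure on a pretriangulated category `C`, in the homological convention:
`le` is the class `C_{t≤0}` and `ge` is the class `C_{t≥0}`. -/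
structure HomTStructure where
  le : Set C
  ge : Set C
  le_iso : ∀ ⦃X Y : C⦄, (X ≅ Y) → Y ∈ le → X ∈ le
  ge_iso : ∀ ⦃X Y : C⦄, (X ≅ Y) → Y ∈ ge → X ∈ ge
  le_shift : ∀ X : C, X ∈ le → X⟦(-1 : ℤ)⟧ ∈ le
  ge_shift : ∀ X : C, X ∈ ge → X⟦(1 : ℤ)⟧ ∈ ge
  orth : ∀ ⦃X Y : C⦄, X⟦(-1 : ℤ)⟧ ∈ ge → Y ∈ le → ∀ f : X ⟶ Y, f = 0
  decomp : ∀ M : C, ∃ (L R : C) (f : L ⟶ M) (g : M ⟶ R) (h : R ⟶ L⟦(1 : ℤ)⟧),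
    Triangle.mk f g h ∈ (distTriang C) ∧ L ∈ ge ∧ R⟦(1 : ℤ)⟧ ∈ le

/-- A contravariant additive functor is cohomological if it sends distinguished
triangles to exact sequences. -/
def IsCohomological {A : Type u₂} [Category.{v₂} A] [Abelian A]
    (H : Cᵒᵖ ⥤ A) [H.Additive] : Prop :=
  ∀ (T : Triangle C), ∀ hT : T ∈ distTriang C,
    (ShortComplex.mk (H.map T.mor₂.op) (H.map T.mor₁.op) (by
      rw [← H.map_comp, ← op_comp, comp_distTriang_mor_zero₁₂ _ hT, op_zero, H.map_zero])).Exact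


/-- Orthogonality for shifted weights: if `X⟦a⟧ ∈ C_{w≤0}` and `Y⟦a-1⟧ ∈ C_{w≥0}`
then every morphism `X ⟶ Y` vanishes. -/
lemma WeightStructure.hom_zero (w : WeightStructure C) {X Y : C} {a b : ℤ} (hab : b + 1 = a)
    (hX : X⟦a⟧ ∈ w.le) (hY : Y⟦b⟧ ∈ w.ge) (f : X ⟶ Y) : f = 0 := by
  apply (shiftFunctor C a).map_injective
  have h := w.orth hX hY
    ((shiftFunctor C a).map f ≫ (shiftFunctorAdd' C b 1 a hab).hom.app Y)
  rw [Functor.map_zero]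
  rw [← cancel_mono ((shiftFunctorAdd' C b 1 a hab).hom.app Y), h, zero_comp]

lemma WeightStructure.shift_mem_ge (w : WeightStructure C) {Y : C} {a b c : ℤ} (h : a + b = c)
    (hY : Y⟦c⟧ ∈ w.ge) : (Y⟦a⟧)⟦b⟧ ∈ w.ge :=
  w.ge_retract ⟨((shiftFunctorAdd' C a b c h).app Y).inv,
    ((shiftFunctorAdd' C a b c h).app Y).hom, Iso.inv_hom_id _⟩ hY

/-- Virtual t-truncations τ_{≤n}(H) are independent of the choices of weight truncations
(up to canonical isomorphism) and functorial: for any morphism g : M ⟶ M' and any choices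
of decomposition data for M and M', there is a unique induced morphism on the images
compatible with every extension of g to the chosen weight decompositions. -/
theorem virtual_truncation_welldefined_functorial
    {A : Type u₂} [Category.{v₂} A] [Abelian A]
    (w : WeightStructure C) (H : Cᵒᵖ ⥤ A) [H.Additive] (hH : IsCohomological C H)
    (n : ℤ) (M M' : C) (gMM : M ⟶ M')
    -- an (n+1)-weight decomposition of M
    (P₁ Q₁ : C) (a₁ : P₁ ⟶ M) (b₁ : M ⟶ Q₁) (c₁ : Q₁ ⟶ P₁⟦(1 : ℤ)⟧)
    (hT₁ : Triangle.mk a₁ b₁ c₁ ∈ (distTriang C))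
    (hP₁ : P₁⟦(-(n + 1) : ℤ)⟧ ∈ w.le) (hQ₁ : Q₁⟦(-(n + 2) : ℤ)⟧ ∈ w.ge)
    -- an n-weight decomposition of M
    (P₀ Q₀ : C) (a₀ : P₀ ⟶ M) (b₀ : M ⟶ Q₀) (c₀ : Q₀ ⟶ P₀⟦(1 : ℤ)⟧)
    (hT₀ : Triangle.mk a₀ b₀ c₀ ∈ (distTriang C))
    (hP₀ : P₀⟦(-n : ℤ)⟧ ∈ w.le) (hQ₀ : Q₀⟦(-(n + 1) : ℤ)⟧ ∈ w.ge)
    -- a connecting morphism extending id_M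
    (e : P₀ ⟶ P₁) (he : e ≫ a₁ = a₀)
    -- an (n+1)-weight decomposition of M'
    (P₁' Q₁' : C) (a₁' : P₁' ⟶ M') (b₁' : M' ⟶ Q₁') (c₁' : Q₁' ⟶ P₁'⟦(1 : ℤ)⟧)
    (hT₁' : Triangle.mk a₁' b₁' c₁' ∈ (distTriang C))
    (hP₁' : P₁'⟦(-(n + 1) : ℤ)⟧ ∈ w.le) (hQ₁' : Q₁'⟦(-(n + 2) : ℤ)⟧ ∈ w.ge)
    -- an n-weight decomposition of M'
    (P₀' Q₀' : C) (a₀' : P₀' ⟶ M') (b₀' : M' ⟶ Q₀') (c₀' : Q₀' ⟶ P₀'⟦(1 : ℤ)⟧)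
    (hT₀' : Triangle.mk a₀' b₀' c₀' ∈ (distTriang C))
    (hP₀' : P₀'⟦(-n : ℤ)⟧ ∈ w.le) (hQ₀' : Q₀'⟦(-(n + 1) : ℤ)⟧ ∈ w.ge)
    -- a connecting morphism extending id_M'
    (e' : P₀' ⟶ P₁') (he' : e' ≫ a₁' = a₀') :
    ∃! θ : image (H.map e'.op) ⟶ image (H.map e.op),
      ∀ (j₁ : P₁ ⟶ P₁') (j₀ : P₀ ⟶ P₀'),
        a₁ ≫ gMM = j₁ ≫ a₁' → a₀ ≫ gMM = j₀ ≫ a₀' →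
        (factorThruImage (H.map e'.op) ≫ θ = H.map j₁.op ≫ factorThruImage (H.map e.op) ∧
         θ ≫ image.ι (H.map e.op) = image.ι (H.map e'.op) ≫ H.map j₀.op) := by
  -- orthogonality facts
  have orth₁ : ∀ f : P₁ ⟶ Q₁', f = 0 := fun f =>
    w.hom_zero C (show (-(n+2) : ℤ) + 1 = -(n+1) by ring) hP₁ hQ₁' f
  have orth₀ : ∀ f : P₀ ⟶ Q₀', f = 0 := fun f =>
    w.hom_zero C (show (-(n+1) : ℤ) + 1 = -n by ring) hP₀ hQ₀' f
  have hgY : (Q₁'⟦(-1 : ℤ)⟧)⟦(-n-1 : ℤ)⟧ ∈ w.ge :=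
    w.shift_mem_ge C (show (-1 : ℤ) + (-n-1) = -(n+2) by ring) hQ₁'
  have orth₂ : ∀ f : P₀ ⟶ Q₁'⟦(-1 : ℤ)⟧, f = 0 := fun f =>
    w.hom_zero C (show (-n-1 : ℤ) + 1 = -n by ring) hP₀ hgY f
  -- existence of extensions of gMM
  obtain ⟨j₁s, hj₁s⟩ : ∃ j : P₁ ⟶ P₁', a₁ ≫ gMM = j ≫ a₁' := Triangle.coyoneda_exact₂ _ hT₁' (a₁ ≫ gMM) (orth₁ _)
  obtain ⟨j₀s, hj₀s⟩ : ∃ j : P₀ ⟶ P₀', a₀ ≫ gMM = j ≫ a₀' := Triangle.coyoneda_exact₂ _ hT₀' (a₀ ≫ gMM) (orth₀ _)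
  -- the key uniqueness: any two extensions are compatible
  have key : ∀ (j₁ : P₁ ⟶ P₁') (j₀ : P₀ ⟶ P₀'),
      a₁ ≫ gMM = j₁ ≫ a₁' → a₀ ≫ gMM = j₀ ≫ a₀' → e ≫ j₁ = j₀ ≫ e' := by
    intro j₁ j₀ h1 h0
    have hd : (j₀ ≫ e' - e ≫ j₁) ≫ a₁' = 0 := by
      rw [Preadditive.sub_comp, assoc, assoc, he', ← h0, ← h1, ← reassoc_of% he, h1, sub_self]
    obtain ⟨g, hg⟩ := Triangle.coyoneda_exact₂ _ (inv_rot_of_distTriang _ hT₁')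
      (j₀ ≫ e' - e ≫ j₁) hd
    have hg0 : g = 0 := orth₂ g
    rw [hg0, zero_comp] at hg
    exact (sub_eq_zero.mp hg).symm
  have hj₁s' := hj₁s
  have hj₀s' := hj₀s
  -- the commuting square defining θ
  have hsq : H.map j₁s.op ≫ H.map e.op = H.map e'.op ≫ H.map j₀s.op := by
    rw [← H.map_comp, ← H.map_comp, ← op_comp, ← op_comp, key j₁s j₀s hj₁s hj₀s]
  refine ⟨image.map (Arrow.homMk' _ _ hsq), fun j₁ j₀ h1 h0 => ?_, fun θ' hθ' => ?_⟩
  · constructor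
    · rw [← cancel_mono (image.ι (H.map e.op)), assoc, assoc, image.map_homMk'_ι,
        image.fac_assoc, image.fac, ← H.map_comp, ← H.map_comp, ← op_comp, ← op_comp,
        key j₁ j₀s h1 hj₀s]
    · rw [image.map_homMk'_ι, ← cancel_epi (factorThruImage (H.map e'.op)),
        image.fac_assoc, image.fac_assoc, ← H.map_comp, ← H.map_comp, ← op_comp, ← op_comp,
        ← key j₁s j₀s hj₁s hj₀s, key j₁s j₀ hj₁s h0]
  · obtain ⟨c1, _⟩ := hθ' j₁s j₀s hj₁s hj₀s
    rw [← cancel_epi (factorThruImage (H.map e'.op)), c1, ← cancel_mono (image.ι (H.map e.op)),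
      assoc, assoc, image.map_homMk'_ι, image.fac_assoc, image.fac, ← H.map_comp, ← op_comp,
      key j₁s j₀s hj₁s hj₀s, op_comp, H.map_comp]
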